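/- Let n ≥ 1 and let T ⊆ ℝⁿ be an infinite countable set whose intersection with every bounded set is finite, satisfying the angular condition and the radial condition. Let F be a face of a compact axis-parallel box in ℝⁿ, i.e. F = {x ∈ ∏ᵢ [aᵢ, bᵢ] : x_j = c} for some index j and c ∈ {a_j, b_j}, where aᵢ ≤ bᵢ for all i. Then #(T ∩ rF) = o(N(r)) as r → ∞, i.e. lim_{r→∞} #(T ∩ rF)/N(r) = 0. -/

import Mathlib

open MeasureTheory Metric Filter Topology Pointwise

/-- The number of points of a set, as a real number (finite sets in view). -/
noncomputable def cnt {α : Type*} (S : Set α) : ℝ := Nat.card S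

/-- `N(r)`: the number of points of `T` of norm `< r`. -/
noncomputable def NN {n : ℕ} (T : Set (EuclideanSpace ℝ (Fin n))) (r : ℝ) : ℝ :=
  cnt (T ∩ ball 0 r)

/-- The wedge `W(X, r)` over a subset `X` of the unit sphere. -/
def Wedge {n : ℕ} (X : Set (EuclideanSpace ℝ (Fin n))) (r : ℝ) :
    Set (EuclideanSpace ℝ (Fin n)) :=
  {x | 0 < ‖x‖ ∧ ‖x‖ < r ∧ ‖x‖⁻¹ • x ∈ X}

lemma cnt_eq_ncard {α : Type*} (S : Set α) : cnt S = S.ncard := by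
  rw [cnt, Nat.card_coe_set_eq]

lemma cnt_nonneg {α : Type*} (S : Set α) : 0 ≤ cnt S := by
  rw [cnt]; positivity

lemma cnt_mono {α : Type*} {S S' : Set α} (h : S ⊆ S') (h' : S'.Finite) : cnt S ≤ cnt S' := by
  rw [cnt_eq_ncard, cnt_eq_ncard]
  exact_mod_cast Set.ncard_le_ncard h h'

lemma cnt_biUnion_le {α ι : Type*} (K : Finset ι) (f : ι → Set α) (S : Set α)
    (h : S ⊆ ⋃ k ∈ K, f k) (hf : ∀ k ∈ K, (f k).Finite) : cnt S ≤ ∑ k ∈ K, cnt (f k) := by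
  classical
  induction K using Finset.induction_on generalizing S with
  | empty =>
      simp only [Finset.notMem_empty, Set.iUnion_of_empty, Set.iUnion_empty,
        Set.subset_empty_iff] at h
      simp [h, cnt_eq_ncard]
  | @insert k K' hk ih =>
      rw [Finset.sum_insert hk]
      have hsub : S ⊆ f k ∪ ⋃ l ∈ K', f l := by
        intro x hx
        have := h hx
        simp only [Finset.mem_insert, Set.mem_iUnion] at this
        obtain ⟨l, hl, hxl⟩ := this
        rcases hl with rfl | hl
        · exact Or.inl hxl
        · exact Or.inr (Set.mem_biUnion hl hxl)
      have h1 : cnt S ≤ cnt (S ∩ f k) + cnt (S ∩ ⋃ l ∈ K', f l) := by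
        rw [cnt_eq_ncard, cnt_eq_ncard, cnt_eq_ncard]
        have : S = (S ∩ f k) ∪ (S ∩ ⋃ l ∈ K', f l) := by
          rw [← Set.inter_union_distrib_left]
          exact (Set.inter_eq_left.mpr hsub).symm
        calc (S.ncard : ℝ) = (((S ∩ f k) ∪ (S ∩ ⋃ l ∈ K', f l)).ncard : ℝ) := by rw [← this]
          _ ≤ _ := by exact_mod_cast Set.ncard_union_le _ _
      refine h1.trans (add_le_add ?_ ?_)
      · exact cnt_mono Set.inter_subset_right (hf k (Finset.mem_insert_self k K'))
      · exact ih _ Set.inter_subset_right (fun l hl => hf l (Finset.mem_insert_of_mem hl))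
lemma cnt_diff {α : Type*} {s t : Set α} (h : t ⊆ s) (hs : s.Finite) :
    cnt (s \ t) = cnt s - cnt t := by
  rw [cnt_eq_ncard, cnt_eq_ncard, cnt_eq_ncard, Set.ncard_diff h (hs.subset h)]
  have := Set.ncard_le_ncard h hs
  push_cast [this]
  ring

variable {n : ℕ}

local notation "E" => EuclideanSpace ℝ (Fin n)

lemma NN_nonneg (T : Set E) (r : ℝ) : 0 ≤ NN T r := cnt_nonneg _

lemma NN_eventually_one {T : Set E} (hTi : T.Infinite)
    (hfin : ∀ S : Set E, Bornology.IsBounded S → (T ∩ S).Finite) :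
    ∀ᶠ r in atTop, 1 ≤ NN T r := by
  obtain ⟨x₀, hx₀⟩ := hTi.nonempty
  filter_upwards [eventually_ge_atTop (‖x₀‖ + 1)] with r hr
  have hx : x₀ ∈ T ∩ ball 0 r := ⟨hx₀, by
    simp only [mem_ball, dist_zero_right]; linarith⟩
  have hfin' : (T ∩ ball 0 r).Finite := hfin _ isBounded_ball
  rw [NN, cnt_eq_ncard]
  have : 0 < (T ∩ ball 0 r).ncard := (Set.ncard_pos hfin').mpr ⟨x₀, hx⟩
  exact_mod_cast this

lemma wedge_subset_ball (X : Set E) (r : ℝ) : Wedge X r ⊆ ball 0 r := fun x hx => by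
  simpa [mem_ball, dist_zero_right] using hx.2.1

lemma wedge_mono (X : Set E) {r r' : ℝ} (h : r ≤ r') : Wedge X r ⊆ Wedge X r' :=
  fun x hx => ⟨hx.1, hx.2.1.trans_le h, hx.2.2⟩

lemma wedge_finite {T : Set E} (hfin : ∀ S : Set E, Bornology.IsBounded S → (T ∩ S).Finite)
    (X : Set E) (r : ℝ) : (T ∩ Wedge X r).Finite :=
  (hfin _ isBounded_ball).subset (Set.inter_subset_inter_right _ (wedge_subset_ball X r))

lemma wedge_smul (X : Set E) {l : ℝ} (hl : 0 < l) (r : ℝ) :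
    Wedge X (l * r) = l • Wedge X r := by
  ext x
  rw [Set.mem_smul_set_iff_inv_smul_mem₀ hl.ne']
  simp only [Wedge, Set.mem_setOf_eq, norm_smul, norm_inv, Real.norm_eq_abs,
    abs_of_pos hl]
  constructor
  · rintro ⟨h1, h2, h3⟩
    have hx : ‖x‖ ≠ 0 := h1.ne'
    refine ⟨by positivity, ?_, ?_⟩
    · rw [inv_mul_lt_iff₀ hl]; exact h2
    · rw [smul_smul]
      have hs : (l⁻¹ * ‖x‖)⁻¹ * l⁻¹ = ‖x‖⁻¹ := by field_simp
      rw [hs]; exact h3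
  · rintro ⟨h1, h2, h3⟩
    have hx : ‖x‖ ≠ 0 := by
      intro h; rw [h, mul_zero] at h1; exact lt_irrefl 0 h1
    have hx' : 0 < ‖x‖ := (norm_nonneg x).lt_of_ne' hx
    refine ⟨hx', ?_, ?_⟩
    · rw [inv_mul_lt_iff₀ hl] at h2; exact h2
    · rw [smul_smul] at h3
      have hs : (l⁻¹ * ‖x‖)⁻¹ * l⁻¹ = ‖x‖⁻¹ := by field_simp
      rw [hs] at h3; exact h3

lemma volume_wedge (X : Set E) {l : ℝ} (hl : 0 < l) :
    volume (Wedge X l) = ENNReal.ofReal (l ^ n) * volume (Wedge X 1) := by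
  have := wedge_smul X hl 1
  rw [mul_one] at this
  rw [this, Measure.addHaar_smul_of_nonneg volume hl.le, finrank_euclideanSpace_fin]

/-- The angular equidistribution condition. -/
def AngularCond {n : ℕ} (T : Set (EuclideanSpace ℝ (Fin n))) : Prop :=
  ∀ X ⊆ sphere (0 : EuclideanSpace ℝ (Fin n)) 1, MeasurableSet X →
    volume (frontier (Wedge X 1)) = 0 →
    Tendsto (fun r => cnt (T ∩ Wedge X r) / NN T r) atTop
      (𝓝 ((volume (Wedge X 1)).toReal /
        (volume (ball (0 : EuclideanSpace ℝ (Fin n)) 1)).toReal))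

/-- The radial (growth) condition: `N(λr)/N(r) → λⁿ`. -/
def RadialCond {n : ℕ} (T : Set (EuclideanSpace ℝ (Fin n))) : Prop :=
  ∀ lam : ℝ, 0 < lam →
    Tendsto (fun r => NN T (lam * r) / NN T r) atTop (𝓝 (lam ^ n))

lemma tendsto_wedge_scaled {T : Set E} (hang : AngularCond T) (hrad : RadialCond T)
    (hpos : ∀ᶠ r in atTop, 1 ≤ NN T r)
    {X : Set E} (hXs : X ⊆ sphere 0 1) (hXm : MeasurableSet X)
    (hXf : volume (frontier (Wedge X 1)) = 0) {lam : ℝ} (hl : 0 < lam) :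
    Tendsto (fun r => cnt (T ∩ Wedge X (lam * r)) / NN T r) atTop
      (𝓝 ((volume (Wedge X lam)).toReal / (volume (ball (0 : E) 1)).toReal)) := by
  have hscale : Tendsto (fun r : ℝ => lam * r) atTop atTop :=
    Tendsto.const_mul_atTop hl tendsto_id
  have h1 := (hang X hXs hXm hXf).comp hscale
  have h2 := hrad lam hl
  have h3 := h1.mul h2
  have heq : (fun r => (cnt (T ∩ Wedge X (lam * r)) / NN T (lam * r)) * (NN T (lam * r) / NN T r))
      =ᶠ[atTop] fun r => cnt (T ∩ Wedge X (lam * r)) / NN T r := by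
    filter_upwards [hscale.eventually hpos] with r hr
    have : NN T (lam * r) ≠ 0 := by linarith
    field_simp
  have h4 := h3.congr' heq
  convert h4 using 2
  rw [volume_wedge X hl, ENNReal.toReal_mul, ENNReal.toReal_ofReal (by positivity)]
  ring

lemma tendsto_shell {T : Set E}
    (hfin : ∀ S : Set E, Bornology.IsBounded S → (T ∩ S).Finite)
    (hang : AngularCond T) (hrad : RadialCond T)
    (hpos : ∀ᶠ r in atTop, 1 ≤ NN T r)
    {X : Set E} (hXs : X ⊆ sphere 0 1) (hXm : MeasurableSet X)
    (hXf : volume (frontier (Wedge X 1)) = 0) {m M : ℝ} (hm : 0 < m) (hmM : m ≤ M) :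
    Tendsto (fun r => cnt (T ∩ (Wedge X (M * r) \ Wedge X (m * r))) / NN T r) atTop
      (𝓝 ((volume (Wedge X M)).toReal / (volume (ball (0 : E) 1)).toReal
         - (volume (Wedge X m)).toReal / (volume (ball (0 : E) 1)).toReal)) := by
  have hM : 0 < M := hm.trans_le hmM
  have hA := tendsto_wedge_scaled hang hrad hpos hXs hXm hXf hM
  have hB := tendsto_wedge_scaled hang hrad hpos hXs hXm hXf hm
  have h3 := hA.sub hB
  refine h3.congr' ?_
  filter_upwards [eventually_ge_atTop (0:ℝ)] with r hr
  have hsub : Wedge X (m * r) ⊆ Wedge X (M * r) :=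
    wedge_mono X (by nlinarith)
  have hfinM : (T ∩ Wedge X (M * r)).Finite := wedge_finite hfin X _
  have hset : T ∩ (Wedge X (M * r) \ Wedge X (m * r))
      = (T ∩ Wedge X (M * r)) \ (T ∩ Wedge X (m * r)) := by
    ext x; simp only [Set.mem_inter_iff, Set.mem_diff]; tauto
  rw [div_sub_div_same, hset, cnt_diff (Set.inter_subset_inter_right _ hsub) hfinM]

/-- The open convex cone of directions within chordal distance `τ` of `p/‖p‖`. -/
def coneC {n : ℕ} (p : EuclideanSpace ℝ (Fin n)) (τ : ℝ) : Set (EuclideanSpace ℝ (Fin n)) :=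
  {x | (1 - τ ^ 2 / 2) * (‖p‖ * ‖x‖) < inner ℝ x p}

lemma isOpen_coneC (p : E) (τ : ℝ) : IsOpen (coneC p τ) := by
  apply isOpen_lt
  · exact (continuous_const.mul (continuous_const.mul continuous_norm))
  · exact (continuous_id.inner continuous_const)

lemma convex_coneC (p : E) {τ : ℝ} (hτ : τ ^ 2 ≤ 2) : Convex ℝ (coneC p τ) := by
  intro x hx y hy s t hs ht hst
  have hc : 0 ≤ 1 - τ ^ 2 / 2 := by linarith
  simp only [coneC, Set.mem_setOf_eq] at hx hy ⊢
  rcases eq_or_lt_of_le hs with hs0 | hs0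
  · have ht1 : t = 1 := by linarith
    simpa [← hs0, ht1] using hy
  · have hnorm : ‖s • x + t • y‖ ≤ s * ‖x‖ + t * ‖y‖ := by
      calc ‖s • x + t • y‖ ≤ ‖s • x‖ + ‖t • y‖ := norm_add_le _ _
        _ = s * ‖x‖ + t * ‖y‖ := by
            rw [norm_smul, norm_smul, Real.norm_eq_abs, Real.norm_eq_abs,
              abs_of_nonneg hs, abs_of_nonneg ht]
    calc (1 - τ ^ 2 / 2) * (‖p‖ * ‖s • x + t • y‖)
        ≤ (1 - τ ^ 2 / 2) * (‖p‖ * (s * ‖x‖ + t * ‖y‖)) := by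
          have := norm_nonneg p
          gcongr
      _ = s * ((1 - τ ^ 2 / 2) * (‖p‖ * ‖x‖)) + t * ((1 - τ ^ 2 / 2) * (‖p‖ * ‖y‖)) := by ring
      _ < s * inner ℝ x p + t * inner ℝ y p :=
          add_lt_add_of_lt_of_le (mul_lt_mul_of_pos_left hx hs0)
            (mul_le_mul_of_nonneg_left hy.le ht)
      _ = inner ℝ (s • x + t • y) p := by
          rw [inner_add_left, real_inner_smul_left, real_inner_smul_left]

lemma smul_mem_coneC {p : E} {τ : ℝ} {x : E} (hx : x ∈ coneC p τ) {t : ℝ} (ht : 0 < t) :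
    t • x ∈ coneC p τ := by
  simp only [coneC, Set.mem_setOf_eq, norm_smul, Real.norm_eq_abs, abs_of_pos ht,
    real_inner_smul_left] at hx ⊢
  calc (1 - τ ^ 2 / 2) * (‖p‖ * (t * ‖x‖)) = t * ((1 - τ ^ 2 / 2) * (‖p‖ * ‖x‖)) := by ring
    _ < t * inner ℝ x p := by exact mul_lt_mul_of_pos_left hx ht

lemma norm_inv_smul {z : E} (hz : z ≠ 0) : ‖(‖z‖⁻¹ • z)‖ = 1 := by
  have hzn : 0 < ‖z‖ := norm_pos_iff.mpr hz
  rw [norm_smul, Real.norm_eq_abs, abs_of_pos (inv_pos.mpr hzn), inv_mul_cancel₀ hzn.ne']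

lemma mem_coneC_iff {p z : E} (hp : p ≠ 0) (hz : z ≠ 0) {τ : ℝ} (hτ : 0 < τ) :
    z ∈ coneC p τ ↔ ‖‖z‖⁻¹ • z - ‖p‖⁻¹ • p‖ < τ := by
  have hzn : 0 < ‖z‖ := norm_pos_iff.mpr hz
  have hpn : 0 < ‖p‖ := norm_pos_iff.mpr hp
  set q : ℝ := ‖z‖⁻¹ * (‖p‖⁻¹ * inner ℝ z p) with hq
  have hI : (inner ℝ z p : ℝ) = ‖z‖ * ‖p‖ * q := by
    rw [hq]; field_simp
  have hsq : ‖‖z‖⁻¹ • z - ‖p‖⁻¹ • p‖ ^ 2 = 2 - 2 * q := by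
    rw [norm_sub_sq_real, norm_inv_smul hz, norm_inv_smul hp,
      real_inner_smul_left, real_inner_smul_right, ← hq]
    ring
  have hnn : 0 ≤ ‖‖z‖⁻¹ • z - ‖p‖⁻¹ • p‖ := norm_nonneg _
  simp only [coneC, Set.mem_setOf_eq, hI]
  constructor
  · intro h
    have hq1 : 1 - τ ^ 2 / 2 < q := by
      have h2 : (1 - τ ^ 2 / 2) * (‖p‖ * ‖z‖) < (‖p‖ * ‖z‖) * q := by
        calc (1 - τ ^ 2 / 2) * (‖p‖ * ‖z‖) < ‖z‖ * ‖p‖ * q := h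
          _ = (‖p‖ * ‖z‖) * q := by ring
      nlinarith [mul_pos hpn hzn]
    have : ‖‖z‖⁻¹ • z - ‖p‖⁻¹ • p‖ ^ 2 < τ ^ 2 := by rw [hsq]; nlinarith
    exact lt_of_pow_lt_pow_left₀ 2 hτ.le this
  · intro h
    have h2 : ‖‖z‖⁻¹ • z - ‖p‖⁻¹ • p‖ ^ 2 < τ ^ 2 := by
      exact pow_lt_pow_left₀ h hnn (by norm_num)
    rw [hsq] at h2
    have hq1 : 1 - τ ^ 2 / 2 < q := by nlinarith
    nlinarith [mul_pos hpn hzn]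

lemma zero_not_mem_coneC (p : E) (τ : ℝ) : (0 : E) ∉ coneC p τ := by
  simp [coneC]

lemma wedge_coneC (p : E) (τ : ℝ) (r : ℝ) :
    Wedge (sphere (0 : E) 1 ∩ coneC p τ) r = (coneC p τ ∩ ball 0 r) \ {0} := by
  ext x
  simp only [Wedge, Set.mem_setOf_eq, Set.mem_inter_iff, Set.mem_diff, Set.mem_singleton_iff,
    mem_ball, mem_sphere, dist_zero_right]
  constructor
  · rintro ⟨h1, h2, h3, h4⟩
    have hx : x ≠ 0 := by intro h; rw [h, norm_zero] at h1; exact lt_irrefl 0 h1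
    refine ⟨⟨?_, ?_⟩, hx⟩
    · have := smul_mem_coneC h4 h1
      rwa [smul_smul, mul_inv_cancel₀ h1.ne', one_smul] at this
    · exact h2
  · rintro ⟨⟨h1, h2⟩, h3⟩
    have h1' : 0 < ‖x‖ := norm_pos_iff.mpr h3
    exact ⟨h1', h2, norm_inv_smul h3, smul_mem_coneC h1 (inv_pos.mpr h1')⟩

lemma nontrivial_E (hn : 1 ≤ n) : Nontrivial (EuclideanSpace ℝ (Fin n)) := by
  have : 0 < Module.finrank ℝ (EuclideanSpace ℝ (Fin n)) := by
    rw [finrank_euclideanSpace_fin]; omega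
  exact Module.nontrivial_of_finrank_pos this

lemma volume_frontier_wedge_coneC (p : E) {τ : ℝ} (hτ : τ ^ 2 ≤ 2) (hn : 1 ≤ n) :
    volume (frontier (Wedge (sphere (0 : E) 1 ∩ coneC p τ) 1)) = 0 := by
  have : Nontrivial (EuclideanSpace ℝ (Fin n)) := nontrivial_E hn
  rw [wedge_coneC]
  have hsub : frontier ((coneC p τ ∩ ball 0 1) \ {0})
      ⊆ (frontier (coneC p τ ∩ ball 0 1)) ∪ frontier ({(0:E)}ᶜ) := by
    rw [Set.diff_eq]
    intro x hx
    have := frontier_inter_subset (coneC p τ ∩ ball 0 1) ({(0:E)}ᶜ) hx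
    rcases this with h | h
    · exact Or.inl h.1
    · exact Or.inr h.2
  refine measure_mono_null hsub (measure_union_null ?_ ?_)
  · have h2 : frontier ((coneC p τ) ∩ ball 0 1)
        ⊆ frontier (coneC p τ) ∪ frontier (ball (0:E) 1) := by
      intro x hx
      rcases frontier_inter_subset (coneC p τ) (ball 0 1) hx with h | h
      · exact Or.inl h.1
      · exact Or.inr h.2
    refine measure_mono_null h2 (measure_union_null ?_ ?_)
    · exact (convex_coneC p hτ).addHaar_frontier volume
    · rw [frontier_ball (0:E) one_ne_zero]
      exact Measure.addHaar_sphere volume 0 1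
  · rw [frontier_compl]
    refine measure_mono_null frontier_subset_closure ?_
    rw [closure_singleton]
    simp

lemma norm_normalize_sub {z p : E} (hz : z ≠ 0) (hp : p ≠ 0) :
    ‖‖z‖⁻¹ • z - ‖p‖⁻¹ • p‖ ≤ 2 * ‖z - p‖ / ‖z‖ := by
  have hzn : 0 < ‖z‖ := norm_pos_iff.mpr hz
  have hpn : 0 < ‖p‖ := norm_pos_iff.mpr hp
  have key : ‖z‖⁻¹ • z - ‖p‖⁻¹ • p = ‖z‖⁻¹ • (z - p) + (‖z‖⁻¹ - ‖p‖⁻¹) • p := by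
    module
  rw [key]
  have h1 : ‖(‖z‖⁻¹ : ℝ) • (z - p)‖ = ‖z - p‖ / ‖z‖ := by
    rw [norm_smul, Real.norm_eq_abs, abs_of_pos (inv_pos.mpr hzn)]
    ring
  have h2 : ‖((‖z‖⁻¹ - ‖p‖⁻¹ : ℝ)) • p‖ ≤ ‖z - p‖ / ‖z‖ := by
    rw [norm_smul, Real.norm_eq_abs]
    have hfrac : ‖z‖⁻¹ - ‖p‖⁻¹ = (‖p‖ - ‖z‖) / (‖z‖ * ‖p‖) := by
      field_simp
    rw [hfrac, abs_div, abs_of_pos (mul_pos hzn hpn)]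
    have hnn : |‖p‖ - ‖z‖| ≤ ‖z - p‖ := by
      rw [norm_sub_rev]; exact abs_norm_sub_norm_le p z
    calc |‖p‖ - ‖z‖| / (‖z‖ * ‖p‖) * ‖p‖ = |‖p‖ - ‖z‖| / ‖z‖ := by field_simp
      _ ≤ ‖z - p‖ / ‖z‖ := by gcongr
  calc ‖(‖z‖⁻¹ : ℝ) • (z - p) + ((‖z‖⁻¹ - ‖p‖⁻¹ : ℝ)) • p‖
      ≤ ‖(‖z‖⁻¹ : ℝ) • (z - p)‖ + ‖((‖z‖⁻¹ - ‖p‖⁻¹ : ℝ)) • p‖ := norm_add_le _ _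
    _ ≤ ‖z - p‖ / ‖z‖ + ‖z - p‖ / ‖z‖ := by rw [h1]; gcongr
    _ = 2 * ‖z - p‖ / ‖z‖ := by ring

section geom

variable {p : EuclideanSpace ℝ (Fin n)} {d η : ℝ}

lemma tau_sq_le (hd : 0 < d) (hdη : 2 * d ≤ η) (hη : 0 < η) (hp2 : 2 * η ≤ ‖p‖) :
    (5 * d / ‖p‖) ^ 2 ≤ 2 := by
  have hpn : 0 < ‖p‖ := by linarith
  rw [div_pow, div_le_iff₀ (by positivity)]
  nlinarith

lemma tau_pos (hd : 0 < d) (hη : 0 < η) (hdη : 2 * d ≤ η) (hp2 : 2 * η ≤ ‖p‖) :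
    0 < 5 * d / ‖p‖ := by
  have hpn : 0 < ‖p‖ := by linarith
  positivity

lemma smul_mem_shell (hd : 0 < d) (hdη : 2 * d ≤ η) (hη : 0 < η) (hp2 : 2 * η ≤ ‖p‖)
    {r : ℝ} (hr : 0 < r) {z : EuclideanSpace ℝ (Fin n)} (hzp : ‖z - p‖ ≤ d) :
    r • z ∈ Wedge (sphere (0:E) 1 ∩ coneC p (5 * d / ‖p‖)) ((‖p‖ + 2 * d) * r) \
      Wedge (sphere (0:E) 1 ∩ coneC p (5 * d / ‖p‖)) ((‖p‖ - d) * r) := by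
  have hpn : 0 < ‖p‖ := by linarith
  have hp0 : p ≠ 0 := by intro h; rw [h, norm_zero] at hpn; exact lt_irrefl 0 hpn
  have hrev : ‖p - z‖ = ‖z - p‖ := norm_sub_rev p z
  have hzlow : ‖p‖ - d ≤ ‖z‖ := by
    have := norm_sub_norm_le p z
    linarith
  have hzhi : ‖z‖ ≤ ‖p‖ + d := by
    have := norm_sub_norm_le z p
    linarith
  have hzn : 0 < ‖z‖ := by linarith
  have hz0 : z ≠ 0 := by intro h; rw [h, norm_zero] at hzn; exact lt_irrefl 0 hzn
  have hτ : 0 < 5 * d / ‖p‖ := tau_pos hd hη hdη hp2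
  -- z is in the cone
  have hzC : z ∈ coneC p (5 * d / ‖p‖) := by
    rw [mem_coneC_iff hp0 hz0 hτ]
    calc ‖‖z‖⁻¹ • z - ‖p‖⁻¹ • p‖ ≤ 2 * ‖z - p‖ / ‖z‖ := norm_normalize_sub hz0 hp0
      _ ≤ 2 * d / (‖p‖ - d) := by
          apply div_le_div₀ (by positivity) (by linarith) (by linarith) hzlow
      _ < 5 * d / ‖p‖ := by
          rw [div_lt_div_iff₀ (by linarith) hpn]
          nlinarith
  have hrz : ‖r • z‖ = r * ‖z‖ := by
    rw [norm_smul, Real.norm_eq_abs, abs_of_pos hr]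
  have hrz0 : r • z ≠ 0 := by
    intro h
    have : ‖r • z‖ = 0 := by rw [h, norm_zero]
    rw [hrz] at this; nlinarith
  constructor
  · rw [wedge_coneC]
    refine ⟨⟨smul_mem_coneC hzC hr, ?_⟩, hrz0⟩
    rw [mem_ball, dist_zero_right, hrz]
    nlinarith
  · rw [wedge_coneC]
    rintro ⟨⟨-, hball⟩, -⟩
    rw [mem_ball, dist_zero_right, hrz] at hball
    nlinarith

lemma shell_subset_closedBall (hd : 0 < d) (hdη : 2 * d ≤ η) (hη : 0 < η) (hp2 : 2 * η ≤ ‖p‖) :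
    Wedge (sphere (0:E) 1 ∩ coneC p (5 * d / ‖p‖)) (‖p‖ + 2 * d) \
      Wedge (sphere (0:E) 1 ∩ coneC p (5 * d / ‖p‖)) (‖p‖ - d) ⊆ closedBall p (10 * d) := by
  have hpn : 0 < ‖p‖ := by linarith
  have hp0 : p ≠ 0 := by intro h; rw [h, norm_zero] at hpn; exact lt_irrefl 0 hpn
  have hτ : 0 < 5 * d / ‖p‖ := tau_pos hd hη hdη hp2
  rintro y ⟨hy1, hy2⟩
  rw [wedge_coneC] at hy1 hy2
  obtain ⟨⟨hyC, hyball⟩, hy0⟩ := hy1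
  have hyn : 0 < ‖y‖ := norm_pos_iff.mpr hy0
  rw [mem_ball, dist_zero_right] at hyball
  have hylow : ‖p‖ - d ≤ ‖y‖ := by
    by_contra h
    push_neg at h
    exact hy2 ⟨⟨hyC, by rw [mem_ball, dist_zero_right]; exact h⟩, hy0⟩
  have hchord : ‖‖y‖⁻¹ • y - ‖p‖⁻¹ • p‖ < 5 * d / ‖p‖ := by
    rw [← mem_coneC_iff hp0 hy0 hτ]; exact hyC
  rw [mem_closedBall, dist_eq_norm]
  set w : EuclideanSpace ℝ (Fin n) := (‖y‖ * ‖p‖⁻¹) • p with hw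
  have h1 : ‖y - w‖ ≤ ‖y‖ * (5 * d / ‖p‖) := by
    have : y - w = ‖y‖ • (‖y‖⁻¹ • y - ‖p‖⁻¹ • p) := by
      rw [smul_sub, smul_smul, smul_smul, mul_inv_cancel₀ hyn.ne', one_smul, hw]
    rw [this, norm_smul, Real.norm_eq_abs, abs_of_pos hyn]
    exact mul_le_mul_of_nonneg_left hchord.le hyn.le
  have h2 : ‖w - p‖ ≤ 2 * d := by
    have : w - p = ((‖y‖ * ‖p‖⁻¹) - 1) • p := by rw [sub_smul, one_smul, hw]
    rw [this, norm_smul, Real.norm_eq_abs]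
    have : |‖y‖ * ‖p‖⁻¹ - 1| * ‖p‖ = |‖y‖ - ‖p‖| := by
      rw [← abs_of_pos hpn, ← abs_mul]
      congr 1
      field_simp
      rw [abs_of_pos hpn]; ring
    rw [this]
    rw [abs_le]
    constructor <;> nlinarith
  calc ‖y - p‖ ≤ ‖y - w‖ + ‖w - p‖ := by
        have : y - p = (y - w) + (w - p) := by abel
        rw [this]; exact norm_add_le _ _
    _ ≤ ‖y‖ * (5 * d / ‖p‖) + 2 * d := by linarith
    _ ≤ 10 * d := by
        have hkey : ‖y‖ * (5 * d) ≤ 8 * d * ‖p‖ := by nlinarith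
        have : ‖y‖ * (5 * d / ‖p‖) ≤ 8 * d := by
          rw [mul_div_assoc', div_le_iff₀ hpn]
          linarith
        linarith

end geom

lemma volB_pos (hn : 1 ≤ n) : 0 < (volume (ball (0:E) 1)).toReal := by
  have : Nontrivial (EuclideanSpace ℝ (Fin n)) := nontrivial_E hn
  refine ENNReal.toReal_pos ?_ measure_ball_lt_top.ne
  exact (measure_ball_pos volume 0 one_pos).ne'

lemma wedge_vol_lt_top (X : Set E) (r : ℝ) : volume (Wedge X r) < ⊤ :=
  lt_of_le_of_lt (measure_mono (wedge_subset_ball X r)) measure_ball_lt_top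

lemma shell_limit_le {p : EuclideanSpace ℝ (Fin n)} {d η : ℝ}
    (hd : 0 < d) (hdη : 2 * d ≤ η) (hη : 0 < η) (hp2 : 2 * η ≤ ‖p‖) (hn : 1 ≤ n) :
    (volume (Wedge (sphere (0:E) 1 ∩ coneC p (5 * d / ‖p‖)) (‖p‖ + 2 * d))).toReal /
        (volume (ball (0:E) 1)).toReal
      - (volume (Wedge (sphere (0:E) 1 ∩ coneC p (5 * d / ‖p‖)) (‖p‖ - d))).toReal /
        (volume (ball (0:E) 1)).toReal
      ≤ (10 * d) ^ n := by
  have : Nontrivial (EuclideanSpace ℝ (Fin n)) := nontrivial_E hn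
  set X := sphere (0:E) 1 ∩ coneC p (5 * d / ‖p‖)
  set vB := (volume (ball (0:E) 1)).toReal with hvB
  have hvBpos : 0 < vB := volB_pos hn
  have hsub : Wedge X (‖p‖ + 2 * d) ⊆ Wedge X (‖p‖ - d) ∪ closedBall p (10 * d) := by
    intro x hx
    by_cases hxm : x ∈ Wedge X (‖p‖ - d)
    · exact Or.inl hxm
    · exact Or.inr (shell_subset_closedBall hd hdη hη hp2 ⟨hx, hxm⟩)
  have hcb : (volume (closedBall p (10 * d))).toReal = (10 * d) ^ n * vB := by
    rw [Measure.addHaar_closedBall volume p (by positivity), finrank_euclideanSpace_fin,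
      ENNReal.toReal_mul, ENNReal.toReal_ofReal (by positivity)]
  have hM : (volume (Wedge X (‖p‖ + 2 * d))).toReal
      ≤ (volume (Wedge X (‖p‖ - d))).toReal + (10 * d) ^ n * vB := by
    have h1 : volume (Wedge X (‖p‖ + 2 * d))
        ≤ volume (Wedge X (‖p‖ - d)) + volume (closedBall p (10 * d)) :=
      (measure_mono hsub).trans (measure_union_le _ _)
    have hfin1 : volume (Wedge X (‖p‖ - d)) ≠ ⊤ := (wedge_vol_lt_top X _).ne
    have hfin2 : volume (closedBall p (10 * d)) ≠ ⊤ := measure_closedBall_lt_top.ne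
    have := ENNReal.toReal_mono (by simp [ENNReal.add_ne_top, hfin1, hfin2]) h1
    rwa [ENNReal.toReal_add hfin1 hfin2, hcb] at this
  rw [div_sub_div_same, div_le_iff₀ hvBpos]
  linarith

lemma dist_le_of_coords {x y : EuclideanSpace ℝ (Fin n)} {t : ℝ} (ht : 0 ≤ t)
    (h : ∀ i, |x i - y i| ≤ t) : dist x y ≤ t * Real.sqrt n := by
  rw [EuclideanSpace.dist_eq]
  have h1 : ∑ i, dist (x i) (y i) ^ 2 ≤ (n : ℝ) * t ^ 2 := by
    calc ∑ i, dist (x i) (y i) ^ 2 ≤ ∑ _i : Fin n, t ^ 2 := by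
          refine Finset.sum_le_sum fun i _ => ?_
          rw [Real.dist_eq]
          exact pow_le_pow_left₀ (abs_nonneg _) (h i) 2
      _ = (n : ℝ) * t ^ 2 := by
          rw [Finset.sum_const, Finset.card_univ, Fintype.card_fin, nsmul_eq_mul]
  calc Real.sqrt (∑ i, dist (x i) (y i) ^ 2) ≤ Real.sqrt ((n : ℝ) * t ^ 2) :=
        Real.sqrt_le_sqrt h1
    _ = t * Real.sqrt n := by
        rw [Real.sqrt_mul (by positivity), Real.sqrt_sq ht]; ring

lemma grid_cover {A B : Fin n → ℝ} {δ : ℝ} (hδ : 0 < δ)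
    {x : EuclideanSpace ℝ (Fin n)} (hx : ∀ i, x i ∈ Set.Icc (A i) (B i)) :
    ∃ κ : (∀ i : Fin n, Fin (⌊(B i - A i) / δ⌋₊ + 1)),
      ∀ i, |x i - (A i + δ * (κ i : ℕ))| ≤ δ := by
  have hκ : ∀ i, ⌊(x i - A i) / δ⌋₊ < ⌊(B i - A i) / δ⌋₊ + 1 := fun i => by
    have hle : (x i - A i) / δ ≤ (B i - A i) / δ := by
      gcongr
      · linarith [(hx i).2]
    exact Nat.lt_succ_of_le (Nat.floor_mono hle)
  refine ⟨fun i => ⟨⌊(x i - A i) / δ⌋₊, hκ i⟩, fun i => ?_⟩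
  have hxA : 0 ≤ x i - A i := by linarith [(hx i).1]
  have hy : 0 ≤ (x i - A i) / δ := by positivity
  have hlow : δ * ⌊(x i - A i) / δ⌋₊ ≤ x i - A i := by
    calc δ * (⌊(x i - A i) / δ⌋₊ : ℝ) ≤ δ * ((x i - A i) / δ) := by
          exact mul_le_mul_of_nonneg_left (Nat.floor_le hy) hδ.le
      _ = x i - A i := by field_simp
  have hhi : x i - A i < δ * (⌊(x i - A i) / δ⌋₊ + 1) := by
    have := Nat.lt_floor_add_one ((x i - A i) / δ)
    calc x i - A i = δ * ((x i - A i) / δ) := by field_simp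
      _ < δ * (⌊(x i - A i) / δ⌋₊ + 1) := by
          exact mul_lt_mul_of_pos_left this hδ
  rw [abs_le]
  constructor <;> [nlinarith; nlinarith]

lemma grid_card_bound {A B : Fin n → ℝ} {δ : ℝ} (hδ : 0 < δ) (hδ1 : δ ≤ 1)
    (hAB : ∀ i, A i ≤ B i) (j : Fin n) (hj : A j = B j) :
    ((∏ i, (⌊(B i - A i) / δ⌋₊ + 1) : ℕ) : ℝ) * δ ^ n
      ≤ δ * ∏ i ∈ Finset.univ.erase j, (B i - A i + 1) := by
  push_cast
  have h1 : (∏ i, ((⌊(B i - A i) / δ⌋₊ : ℝ) + 1)) * δ ^ n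
      = ∏ i, (((⌊(B i - A i) / δ⌋₊ : ℝ) + 1) * δ) := by
    rw [Finset.prod_mul_distrib, Finset.prod_const, Finset.card_univ, Fintype.card_fin]
  rw [h1]
  have h2 : ∀ i : Fin n, ((⌊(B i - A i) / δ⌋₊ : ℝ) + 1) * δ ≤ B i - A i + δ := fun i => by
    have hy : 0 ≤ (B i - A i) / δ := by
      have := hAB i
      apply div_nonneg (by linarith) hδ.le
    have := Nat.floor_le hy
    have h3 : ((⌊(B i - A i) / δ⌋₊ : ℝ) + 1) * δ ≤ ((B i - A i) / δ + 1) * δ := by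
      exact mul_le_mul_of_nonneg_right (by linarith) hδ.le
    calc ((⌊(B i - A i) / δ⌋₊ : ℝ) + 1) * δ ≤ ((B i - A i) / δ + 1) * δ := h3
      _ = B i - A i + δ := by field_simp
  calc ∏ i, (((⌊(B i - A i) / δ⌋₊ : ℝ) + 1) * δ) ≤ ∏ i, (B i - A i + δ) := by
        refine Finset.prod_le_prod (fun i _ => by positivity) (fun i _ => h2 i)
    _ = (B j - A j + δ) * ∏ i ∈ Finset.univ.erase j, (B i - A i + δ) := by
        rw [← Finset.mul_prod_erase Finset.univ _ (Finset.mem_univ j)]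
    _ = δ * ∏ i ∈ Finset.univ.erase j, (B i - A i + δ) := by
        rw [hj]
        congr 1
        ring
    _ ≤ δ * ∏ i ∈ Finset.univ.erase j, (B i - A i + 1) := by
        refine mul_le_mul_of_nonneg_left ?_ hδ.le
        refine Finset.prod_le_prod (fun i _ => ?_) (fun i _ => by linarith [hAB i])
        linarith [hAB i]

theorem boundary_points_lemma
    {n : ℕ} (hn : 1 ≤ n) (T : Set (EuclideanSpace ℝ (Fin n)))
    (hTc : T.Countable) (hTi : T.Infinite)
    (hfin : ∀ S : Set (EuclideanSpace ℝ (Fin n)), Bornology.IsBounded S → (T ∩ S).Finite)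
    (hang : AngularCond T) (hrad : RadialCond T)
    (a b : Fin n → ℝ) (hab : ∀ i, a i ≤ b i)
    (j : Fin n) (c : ℝ) (hc : c = a j ∨ c = b j) :
    Tendsto (fun r =>
        cnt (T ∩ r • {x : EuclideanSpace ℝ (Fin n) |
          (∀ i, x i ∈ Set.Icc (a i) (b i)) ∧ x j = c}) / NN T r)
      atTop (𝓝 0) := by
  classical
  have hNN1 : ∀ᶠ r in atTop, 1 ≤ NN T r := NN_eventually_one hTi hfin
  have hn0 : (0 : ℝ) < n := by exact_mod_cast hn
  have hsq : 0 < Real.sqrt n := Real.sqrt_pos.mpr hn0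
  -- rewrite the face as a box with a degenerate side
  set A : Fin n → ℝ := fun i => if i = j then c else a i with hA
  set B : Fin n → ℝ := fun i => if i = j then c else b i with hB
  have hcab : a j ≤ c ∧ c ≤ b j := by
    rcases hc with h | h <;> constructor <;> simp [h, hab j]
  have hABle : ∀ i, A i ≤ B i := by
    intro i
    by_cases h : i = j <;> simp [hA, hB, h, hab i]
  have hABj : A j = B j := by simp [hA, hB]
  have hFeq : {x : EuclideanSpace ℝ (Fin n) | (∀ i, x i ∈ Set.Icc (a i) (b i)) ∧ x j = c}
      = {x : EuclideanSpace ℝ (Fin n) | ∀ i, x i ∈ Set.Icc (A i) (B i)} := by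
    ext x
    simp only [Set.mem_setOf_eq]
    constructor
    · rintro ⟨hbox, hxj⟩ i
      by_cases h : i = j
      · subst h; simp [hA, hB, hxj]
      · simpa [hA, hB, h] using hbox i
    · intro h
      constructor
      · intro i
        by_cases hij : i = j
        · subst hij
          have := h i
          simp only [hA, hB, if_pos rfl] at this
          rw [Set.mem_Icc] at this ⊢
          constructor <;> [linarith [hcab.1, this.1]; linarith [hcab.2, this.2]]
        · simpa [hA, hB, hij] using h i
      · have := h j
        simp only [hA, hB, if_pos rfl, Set.mem_Icc] at this
        linarith [this.1, this.2]
  rw [hFeq]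
  set F := {x : EuclideanSpace ℝ (Fin n) | ∀ i, x i ∈ Set.Icc (A i) (B i)} with hF
  rw [NormedAddCommGroup.tendsto_nhds_zero]
  intro ε hε
  -- parameters
  set η : ℝ := min 1 (ε / (3 * 3 ^ n)) with hηdef
  have hηpos : 0 < η := by
    apply lt_min one_pos
    positivity
  have hη1 : η ≤ 1 := min_le_left _ _
  set P : ℝ := ∏ i ∈ Finset.univ.erase j, (B i - A i + 1) with hPdef
  have hP1 : 1 ≤ P := by
    rw [hPdef]
    calc (1:ℝ) = ∏ _i ∈ Finset.univ.erase j, (1:ℝ) := by rw [Finset.prod_const_one]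
      _ ≤ ∏ i ∈ Finset.univ.erase j, (B i - A i + 1) :=
          Finset.prod_le_prod (fun i _ => by norm_num) (fun i _ => by linarith [hABle i])
  have hPpos : 0 < P := by linarith
  set Cn : ℝ := (10 * Real.sqrt n) ^ n with hCndef
  have hCnpos : 0 < Cn := by positivity
  set δ : ℝ := min (min 1 (η / (2 * Real.sqrt n + 1))) (ε / (3 * Cn * P)) with hδdef
  have hδpos : 0 < δ := by
    apply lt_min (lt_min one_pos (by positivity))
    positivity
  have hδ1 : δ ≤ 1 := le_trans (min_le_left _ _) (min_le_left _ _)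
  set d : ℝ := δ * Real.sqrt n with hddef
  have hdpos : 0 < d := by positivity
  have hdη : 2 * d ≤ η := by
    have h1 : δ ≤ η / (2 * Real.sqrt n + 1) := le_trans (min_le_left _ _) (min_le_right _ _)
    have h2 : δ * (2 * Real.sqrt n + 1) ≤ η := by
      rw [← le_div_iff₀ (by positivity)]
      exact h1
    nlinarith
  -- the grid
  set pt : (∀ i : Fin n, Fin (⌊(B i - A i) / δ⌋₊ + 1)) → EuclideanSpace ℝ (Fin n) :=
    fun κ => WithLp.toLp 2 (fun i => A i + δ * ((κ i : ℕ) : ℝ)) with hpt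
  set Kfar : Finset (∀ i : Fin n, Fin (⌊(B i - A i) / δ⌋₊ + 1)) :=
    Finset.univ.filter (fun κ => 2 * η ≤ ‖pt κ‖) with hKfar
  set X : (∀ i : Fin n, Fin (⌊(B i - A i) / δ⌋₊ + 1)) → Set (EuclideanSpace ℝ (Fin n)) :=
    fun κ => sphere 0 1 ∩ coneC (pt κ) (5 * d / ‖pt κ‖) with hX
  -- covering of F
  have hcover : ∀ x ∈ F, x ∈ ball (0 : EuclideanSpace ℝ (Fin n)) (3 * η) ∨
      ∃ κ ∈ Kfar, x ∈ closedBall (pt κ) d := by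
    intro x hx
    obtain ⟨κ, hκ⟩ := grid_cover hδpos hx
    have hdist : dist x (pt κ) ≤ d := by
      rw [hddef]
      exact dist_le_of_coords hδpos.le hκ
    by_cases hκfar : 2 * η ≤ ‖pt κ‖
    · refine Or.inr ⟨κ, ?_, ?_⟩
      · rw [hKfar]; simp [hκfar]
      · rwa [mem_closedBall]
    · push_neg at hκfar
      left
      rw [mem_ball, dist_zero_right]
      calc ‖x‖ ≤ ‖pt κ‖ + dist x (pt κ) := by
            rw [dist_eq_norm]
            have := norm_sub_norm_le x (pt κ)
            linarith [norm_sub_norm_le x (pt κ)]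
        _ < 2 * η + d := by linarith
        _ ≤ 3 * η := by linarith
  -- shell limits
  have hKmem : ∀ κ ∈ Kfar, 2 * η ≤ ‖pt κ‖ := by
    intro κ hκ
    rw [hKfar] at hκ
    simpa using hκ
  have hshell : ∀ κ ∈ Kfar,
      Tendsto (fun r => cnt (T ∩ (Wedge (X κ) ((‖pt κ‖ + 2 * d) * r) \
          Wedge (X κ) ((‖pt κ‖ - d) * r))) / NN T r) atTop
        (𝓝 ((volume (Wedge (X κ) (‖pt κ‖ + 2 * d))).toReal /
            (volume (ball (0 : EuclideanSpace ℝ (Fin n)) 1)).toReal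
          - (volume (Wedge (X κ) (‖pt κ‖ - d))).toReal /
            (volume (ball (0 : EuclideanSpace ℝ (Fin n)) 1)).toReal)) := by
    intro κ hκ
    have hp2 := hKmem κ hκ
    have hpn : 0 < ‖pt κ‖ := by linarith
    have hτpos : 0 < 5 * d / ‖pt κ‖ := tau_pos hdpos hηpos hdη hp2
    refine tendsto_shell hfin hang hrad hNN1 Set.inter_subset_left ?_ ?_ ?_ ?_
    · exact (isClosed_sphere.measurableSet).inter (isOpen_coneC _ _).measurableSet
    · exact volume_frontier_wedge_coneC (pt κ) (tau_sq_le hdpos hdη hηpos hp2) hn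
    · linarith
    · linarith
  -- the dominating function and its limit
  set Φ : ℝ → ℝ := fun r => NN T (3 * η * r) / NN T r +
      ∑ κ ∈ Kfar, cnt (T ∩ (Wedge (X κ) ((‖pt κ‖ + 2 * d) * r) \
          Wedge (X κ) ((‖pt κ‖ - d) * r))) / NN T r with hΦdef
  have hΦ : Tendsto Φ atTop (𝓝 ((3 * η) ^ n +
      ∑ κ ∈ Kfar, ((volume (Wedge (X κ) (‖pt κ‖ + 2 * d))).toReal /
            (volume (ball (0 : EuclideanSpace ℝ (Fin n)) 1)).toReal
          - (volume (Wedge (X κ) (‖pt κ‖ - d))).toReal /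
            (volume (ball (0 : EuclideanSpace ℝ (Fin n)) 1)).toReal))) := by
    exact (hrad (3 * η) (by positivity)).add (tendsto_finset_sum Kfar hshell)
  -- the limit is < ε
  have hΛ : (3 * η) ^ n +
      ∑ κ ∈ Kfar, ((volume (Wedge (X κ) (‖pt κ‖ + 2 * d))).toReal /
            (volume (ball (0 : EuclideanSpace ℝ (Fin n)) 1)).toReal
          - (volume (Wedge (X κ) (‖pt κ‖ - d))).toReal /
            (volume (ball (0 : EuclideanSpace ℝ (Fin n)) 1)).toReal) < ε := by
    have h1 : (3 * η) ^ n ≤ ε / 3 := by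
      have hηn : η ^ n ≤ η := pow_le_of_le_one hηpos.le hη1 (by omega)
      have : (3 * η) ^ n = 3 ^ n * η ^ n := mul_pow 3 η n
      have h3 : (3 : ℝ) ^ n * η ^ n ≤ 3 ^ n * η := by
        exact mul_le_mul_of_nonneg_left hηn (by positivity)
      have h4 : η ≤ ε / (3 * 3 ^ n) := min_le_right _ _
      have h5 : (3 : ℝ) ^ n * η ≤ 3 ^ n * (ε / (3 * 3 ^ n)) := by
        exact mul_le_mul_of_nonneg_left h4 (by positivity)
      have h6 : (3 : ℝ) ^ n * (ε / (3 * 3 ^ n)) = ε / 3 := by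
        field_simp
      linarith
    have h2 : ∑ κ ∈ Kfar, ((volume (Wedge (X κ) (‖pt κ‖ + 2 * d))).toReal /
            (volume (ball (0 : EuclideanSpace ℝ (Fin n)) 1)).toReal
          - (volume (Wedge (X κ) (‖pt κ‖ - d))).toReal /
            (volume (ball (0 : EuclideanSpace ℝ (Fin n)) 1)).toReal) ≤ ε / 3 := by
      have hterm : ∀ κ ∈ Kfar, (volume (Wedge (X κ) (‖pt κ‖ + 2 * d))).toReal /
            (volume (ball (0 : EuclideanSpace ℝ (Fin n)) 1)).toReal
          - (volume (Wedge (X κ) (‖pt κ‖ - d))).toReal /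
            (volume (ball (0 : EuclideanSpace ℝ (Fin n)) 1)).toReal ≤ (10 * d) ^ n := by
        intro κ hκ
        exact shell_limit_le hdpos hdη hηpos (hKmem κ hκ) hn
      calc ∑ κ ∈ Kfar, ((volume (Wedge (X κ) (‖pt κ‖ + 2 * d))).toReal /
            (volume (ball (0 : EuclideanSpace ℝ (Fin n)) 1)).toReal
          - (volume (Wedge (X κ) (‖pt κ‖ - d))).toReal /
            (volume (ball (0 : EuclideanSpace ℝ (Fin n)) 1)).toReal)
          ≤ ∑ _κ ∈ Kfar, (10 * d) ^ n := Finset.sum_le_sum hterm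
        _ = (Kfar.card : ℝ) * (10 * d) ^ n := by
            rw [Finset.sum_const, nsmul_eq_mul]
        _ ≤ ((∏ i, (⌊(B i - A i) / δ⌋₊ + 1) : ℕ) : ℝ) * (10 * d) ^ n := by
            refine mul_le_mul_of_nonneg_right ?_ (by positivity)
            have hcard : Kfar.card ≤ Fintype.card (∀ i : Fin n, Fin (⌊(B i - A i) / δ⌋₊ + 1)) := by
              rw [hKfar]
              exact (Finset.card_filter_le _ _).trans (by rw [Finset.card_univ])
            have hcard2 : Fintype.card (∀ i : Fin n, Fin (⌊(B i - A i) / δ⌋₊ + 1))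
                = ∏ i, (⌊(B i - A i) / δ⌋₊ + 1) := by
              rw [Fintype.card_pi]
              congr 1
              ext i
              rw [Fintype.card_fin]
            exact_mod_cast hcard.trans hcard2.le
        _ = Cn * (((∏ i, (⌊(B i - A i) / δ⌋₊ + 1) : ℕ) : ℝ) * δ ^ n) := by
            rw [hCndef, hddef]
            rw [show (10 : ℝ) * (δ * Real.sqrt n) = (10 * Real.sqrt n) * δ by ring, mul_pow]
            ring
        _ ≤ Cn * (δ * P) := by
            refine mul_le_mul_of_nonneg_left ?_ hCnpos.le
            exact grid_card_bound hδpos hδ1 hABle j hABj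
        _ ≤ ε / 3 := by
            have hδ3 : δ ≤ ε / (3 * Cn * P) := min_le_right _ _
            have : δ * (Cn * P) ≤ ε / (3 * Cn * P) * (Cn * P) :=
              mul_le_mul_of_nonneg_right hδ3 (by positivity)
            have heq : ε / (3 * Cn * P) * (Cn * P) = ε / 3 := by
              field_simp
            nlinarith
    linarith
  have hev1 : ∀ᶠ r in atTop, Φ r < ε := hΦ.eventually_lt_const hΛ
  -- eventual domination
  have hdom : ∀ᶠ r in atTop, cnt (T ∩ r • F) / NN T r ≤ Φ r := by
    filter_upwards [hNN1, eventually_ge_atTop (1 : ℝ)] with r hr1 hr2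
    have hrpos : 0 < r := by linarith
    have hNNpos : 0 < NN T r := by linarith
    -- set containment
    have hsub : T ∩ r • F ⊆ (T ∩ ball 0 (3 * η * r)) ∪
        ⋃ κ ∈ Kfar, (T ∩ (Wedge (X κ) ((‖pt κ‖ + 2 * d) * r) \
          Wedge (X κ) ((‖pt κ‖ - d) * r))) := by
      rintro x ⟨hxT, hxF⟩
      obtain ⟨z, hzF, rfl⟩ := hxF
      rcases hcover z hzF with hz | ⟨κ, hκ, hzκ⟩
      · left
        refine ⟨hxT, ?_⟩
        rw [mem_ball, dist_zero_right, norm_smul, Real.norm_eq_abs, abs_of_pos hrpos]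
        rw [mem_ball, dist_zero_right] at hz
        calc r * ‖z‖ < r * (3 * η) := by exact mul_lt_mul_of_pos_left hz hrpos
          _ = 3 * η * r := by ring
      · right
        rw [mem_closedBall, dist_eq_norm] at hzκ
        refine Set.mem_biUnion hκ ⟨hxT, ?_⟩
        exact smul_mem_shell hdpos hdη hηpos (hKmem κ hκ) hrpos hzκ
    -- counting
    have hfin0 : (T ∩ ball (0 : EuclideanSpace ℝ (Fin n)) (3 * η * r)).Finite :=
      hfin _ isBounded_ball
    have hfinκ : ∀ κ, (T ∩ (Wedge (X κ) ((‖pt κ‖ + 2 * d) * r) \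
        Wedge (X κ) ((‖pt κ‖ - d) * r))).Finite := fun κ =>
      (hfin _ isBounded_ball).subset (Set.inter_subset_inter_right _
        (Set.diff_subset.trans (wedge_subset_ball _ _)))
    have hcnt : cnt (T ∩ r • F) ≤ NN T (3 * η * r) +
        ∑ κ ∈ Kfar, cnt (T ∩ (Wedge (X κ) ((‖pt κ‖ + 2 * d) * r) \
          Wedge (X κ) ((‖pt κ‖ - d) * r))) := by
      have hU : (⋃ κ ∈ Kfar, (T ∩ (Wedge (X κ) ((‖pt κ‖ + 2 * d) * r) \
          Wedge (X κ) ((‖pt κ‖ - d) * r)))).Finite :=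
        Set.Finite.biUnion Kfar.finite_toSet (fun κ _ => hfinκ κ)
      have h1 : cnt (T ∩ r • F) ≤ cnt ((T ∩ ball 0 (3 * η * r)) ∪
          ⋃ κ ∈ Kfar, (T ∩ (Wedge (X κ) ((‖pt κ‖ + 2 * d) * r) \
            Wedge (X κ) ((‖pt κ‖ - d) * r)))) :=
        cnt_mono hsub (hfin0.union hU)
      have h2 : cnt ((T ∩ ball 0 (3 * η * r)) ∪
          ⋃ κ ∈ Kfar, (T ∩ (Wedge (X κ) ((‖pt κ‖ + 2 * d) * r) \
            Wedge (X κ) ((‖pt κ‖ - d) * r))))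
          ≤ cnt (T ∩ ball 0 (3 * η * r)) +
            cnt (⋃ κ ∈ Kfar, (T ∩ (Wedge (X κ) ((‖pt κ‖ + 2 * d) * r) \
              Wedge (X κ) ((‖pt κ‖ - d) * r)))) := by
        rw [cnt_eq_ncard, cnt_eq_ncard, cnt_eq_ncard]
        exact_mod_cast Set.ncard_union_le _ _
      have h3 : cnt (⋃ κ ∈ Kfar, (T ∩ (Wedge (X κ) ((‖pt κ‖ + 2 * d) * r) \
            Wedge (X κ) ((‖pt κ‖ - d) * r))))
          ≤ ∑ κ ∈ Kfar, cnt (T ∩ (Wedge (X κ) ((‖pt κ‖ + 2 * d) * r) \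
            Wedge (X κ) ((‖pt κ‖ - d) * r))) :=
        cnt_biUnion_le Kfar _ _ subset_rfl (fun κ _ => hfinκ κ)
      have : NN T (3 * η * r) = cnt (T ∩ ball 0 (3 * η * r)) := rfl
      linarith
    have hrw : NN T (3 * η * r) / NN T r +
        ∑ κ ∈ Kfar, cnt (T ∩ (Wedge (X κ) ((‖pt κ‖ + 2 * d) * r) \
          Wedge (X κ) ((‖pt κ‖ - d) * r))) / NN T r
        = (NN T (3 * η * r) +
          ∑ κ ∈ Kfar, cnt (T ∩ (Wedge (X κ) ((‖pt κ‖ + 2 * d) * r) \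
            Wedge (X κ) ((‖pt κ‖ - d) * r)))) / NN T r := by
      rw [add_div, Finset.sum_div]
    have hgoal : cnt (T ∩ r • F) / NN T r ≤ NN T (3 * η * r) / NN T r +
        ∑ κ ∈ Kfar, cnt (T ∩ (Wedge (X κ) ((‖pt κ‖ + 2 * d) * r) \
          Wedge (X κ) ((‖pt κ‖ - d) * r))) / NN T r := by
      rw [hrw]
      exact (div_le_div_iff_of_pos_right hNNpos).mpr hcnt
    exact hgoal
  filter_upwards [hev1, hdom] with r h1 h2
  rw [Real.norm_eq_abs, abs_of_nonneg (div_nonneg (cnt_nonneg _) (NN_nonneg _ _))]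
  exact h2.trans_lt h1
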